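/- Let R be a linearly ordered commutative ring in which there is no element x with 0 < x < 1, and let k ≥ 1 be a natural number. Let m, n, p be elements of R with m > 0, n > 0, and p ≥ 0. Then ∑_{i=0}^{k} ∏_{0 ≤ j ≤ k, j ≠ i} (m + j·n) ≠ p · ∏_{j=0}^{k} (m + j·n), where j denotes the image of the natural number j in R. -/

import Mathlib

open Finset Nat

namespace NagellProof

/-- Product of the terms of the arithmetic progression `m, m+n, …, m+kn`. -/
def DD (k m n : ℕ) : ℕ := ∏ j ∈ range (k+1), (m + j * n)

/-- The sum of the products of all terms but one. -/
def NN (k m n : ℕ) : ℕ := ∑ i ∈ range (k+1), ∏ j ∈ (range (k+1)).erase i, (m + j * n)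

lemma term_pos {m : ℕ} (hm : 1 ≤ m) (j n : ℕ) : 0 < m + j * n := by omega

lemma DD_pos {k m n : ℕ} (hm : 1 ≤ m) : 0 < DD k m n := by
  apply Finset.prod_pos; intro j _; exact term_pos hm j n

lemma not_dvd_of_unique_max {k m n p i0 : ℕ} (hm : 1 ≤ m) (hp : p.Prime)
    (hi0 : i0 ∈ range (k+1))
    (hE : 1 ≤ (m + i0*n).factorization p)
    (hmax : ∀ i ∈ range (k+1), i ≠ i0 →
      (m + i*n).factorization p < (m + i0*n).factorization p) :
    ¬ DD k m n ∣ NN k m n := by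
  intro hdvd
  obtain ⟨q, hq⟩ := hdvd
  set s : Finset ℕ := range (k+1) with hs
  set a : ℕ → ℕ := fun j => m + j * n with ha
  have hane : ∀ j ∈ s, a j ≠ 0 := fun j _ => (term_pos hm j n).ne'
  set V : ℕ → ℕ := fun j => (a j).factorization p with hV
  -- factorization of a product over any subset
  have hfact : ∀ t : Finset ℕ, t ⊆ s → (∏ j ∈ t, a j).factorization p = ∑ j ∈ t, V j := by
    intro t ht
    rw [Nat.factorization_prod (fun j hj => hane j (ht hj))]
    exact Finset.sum_apply' p
  set T : ℕ := ∑ j ∈ s.erase i0, V j with hT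
  have herase_sub : ∀ i : ℕ, s.erase i ⊆ s := fun i => Finset.erase_subset i s
  -- the product over erase i0 has exponent exactly T
  have hBfact : (∏ j ∈ s.erase i0, a j).factorization p = T := hfact _ (herase_sub i0)
  have hBne : (∏ j ∈ s.erase i0, a j) ≠ 0 :=
    (Finset.prod_pos (fun j hj => term_pos hm j n)).ne'
  -- the full sum
  have hSig : ∑ j ∈ s, V j = T + V i0 := by
    rw [hT, ← Finset.sum_erase_add s V hi0]
  -- other products have exponent ≥ T+1
  have hother : ∀ i ∈ s, i ≠ i0 → p ^ (T+1) ∣ ∏ j ∈ s.erase i, a j := by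
    intro i hi hne
    rw [(hp.pow_dvd_iff_le_factorization (Finset.prod_pos (fun j hj => term_pos hm j n)).ne'),
      hfact _ (herase_sub i)]
    have h1 : ∑ j ∈ s.erase i, V j + V i = T + V i0 := by
      rw [Finset.sum_erase_add s V hi, hSig]
    have h2 : V i < V i0 := hmax i hi hne
    omega
  -- DD has exponent ≥ T+1
  have hDD : p ^ (T+1) ∣ DD k m n := by
    rw [(hp.pow_dvd_iff_le_factorization (by
      have := Finset.prod_pos (s := s) (f := a) (fun j hj => term_pos hm j n)
      simpa [DD] using this.ne'))]
    have h3 : (DD k m n).factorization p = T + V i0 := by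
      rw [show DD k m n = ∏ j ∈ s, a j from rfl, hfact s (le_refl s), hSig]
    have h4 : 1 ≤ V i0 := hE
    omega
  -- NN = B + rest
  have hNN : NN k m n = (∏ j ∈ s.erase i0, a j) + ∑ i ∈ s.erase i0, ∏ j ∈ s.erase i, a j := by
    rw [show NN k m n = ∑ i ∈ s, ∏ j ∈ s.erase i, a j from rfl,
      ← Finset.add_sum_erase s _ hi0]
  have hrest : p ^ (T+1) ∣ ∑ i ∈ s.erase i0, ∏ j ∈ s.erase i, a j := by
    apply Finset.dvd_sum
    intro i hi
    exact hother i (herase_sub i0 hi) (Finset.ne_of_mem_erase hi)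
  have hNdvd : p ^ (T+1) ∣ NN k m n := by
    rw [hq]; exact Dvd.dvd.mul_right hDD q
  have hBdvd : p ^ (T+1) ∣ ∏ j ∈ s.erase i0, a j := by
    have : (∏ j ∈ s.erase i0, a j) = NN k m n - ∑ i ∈ s.erase i0, ∏ j ∈ s.erase i, a j := by
      omega
    rw [this]
    exact Nat.dvd_sub hNdvd hrest
  have := Nat.pow_succ_factorization_not_dvd hBne hp
  rw [hBfact] at this
  exact this hBdvd

lemma odd_case {k m n : ℕ} (hk : 1 ≤ k) (hm : 1 ≤ m) (hodd : n % 2 = 1) :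
    ¬ DD k m n ∣ NN k m n := by
  set s : Finset ℕ := range (k+1) with hs
  set a : ℕ → ℕ := fun j => m + j * n with ha
  have hane : ∀ j, a j ≠ 0 := fun j => (term_pos hm j n).ne'
  set V : ℕ → ℕ := fun j => (a j).factorization 2 with hV
  set E : ℕ := s.sup V with hEdef
  have hle : ∀ j ∈ s, V j ≤ E := fun j hj => Finset.le_sup hj
  -- some even term among indices 0,1
  have hev : ∃ j ∈ s, 2 ∣ a j := by
    rcases Nat.even_or_odd m with hme | hmo
    · exact ⟨0, by simp [hs], by simpa [ha] using hme.two_dvd⟩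
    · refine ⟨1, by simp [hs]; omega, ?_⟩
      have h1 : a 1 = m + n := by simp [ha]
      have hm2 : m % 2 = 1 := Nat.odd_iff.mp hmo
      rw [h1]
      omega
  have hE1 : 1 ≤ E := by
    obtain ⟨j, hj, hdvd⟩ := hev
    calc 1 ≤ V j :=
            (Nat.Prime.dvd_iff_one_le_factorization Nat.prime_two (hane j)).mp hdvd
      _ ≤ E := hle j hj
  -- set of maximizers
  set I : Finset ℕ := s.filter (fun j => V j = E) with hI
  have hIne : I.Nonempty := by
    obtain ⟨j0, hj0, hj0E⟩ := Finset.exists_mem_eq_sup s ⟨0, by simp [hs]⟩ V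
    exact ⟨j0, Finset.mem_filter.mpr ⟨hj0, hj0E.symm⟩⟩
  set i0 : ℕ := I.min' hIne with hi0def
  have hi0I : i0 ∈ I := Finset.min'_mem I hIne
  have hi0s : i0 ∈ s := (Finset.mem_filter.mp hi0I).1
  have hi0E : V i0 = E := (Finset.mem_filter.mp hi0I).2
  -- uniqueness
  have huniq : ∀ i ∈ s, i ≠ i0 → V i < V i0 := by
    intro i hi hne
    rcases lt_or_ge (V i) (V i0) with h | h
    · exact h
    exfalso
    have hiE : V i = E := le_antisymm (hle i hi) (le_trans (le_of_eq hi0E.symm) h)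
    have hiI : i ∈ I := Finset.mem_filter.mpr ⟨hi, hiE⟩
    have hgt : i0 < i := lt_of_le_of_ne (Finset.min'_le I i hiI) (Ne.symm hne)
    -- 2^E divides both a i and a i0
    have hd1 : 2 ^ E ∣ a i0 := by
      rw [Nat.Prime.pow_dvd_iff_le_factorization Nat.prime_two (hane i0)]
      exact le_of_eq hi0E.symm
    have hd2 : 2 ^ E ∣ a i := by
      rw [Nat.Prime.pow_dvd_iff_le_factorization Nat.prime_two (hane i)]
      exact le_trans (le_of_eq hi0E.symm) h
    obtain ⟨d, rfl⟩ : ∃ d, i = i0 + (d + 1) := ⟨i - i0 - 1, by omega⟩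
    have hdiff : a (i0 + (d+1)) = a i0 + (d+1) * n := by simp [ha]; ring
    have hdvd_diff : 2 ^ E ∣ (d+1) * n := by
      have : 2 ^ E ∣ a i0 + (d+1) * n := hdiff ▸ hd2
      exact (Nat.dvd_add_right hd1).mp this
    have hcop : Nat.Coprime (2 ^ E) n := by
      apply Nat.Coprime.pow_left
      rw [Nat.Prime.coprime_iff_not_dvd Nat.prime_two]
      omega
    have hdvd_d : 2 ^ E ∣ d + 1 := (Nat.Coprime.dvd_of_dvd_mul_right hcop) hdvd_diff
    -- the index i0 + 2^E is in range and has strictly bigger valuation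
    have hj2 : i0 + 2 ^ E ∈ s := by
      have h1 : 2 ^ E ≤ d + 1 := Nat.le_of_dvd (by omega) hdvd_d
      have h2 : i0 + (d+1) ∈ s := hi
      simp only [hs, Finset.mem_range] at h2 ⊢
      omega
    -- a i0 = 2^E * u with u odd
    obtain ⟨u, hu⟩ := hd1
    have hunotdvd : ¬ 2 ^ (E + 1) ∣ a i0 := by
      have := Nat.pow_succ_factorization_not_dvd (hane i0) Nat.prime_two
      rwa [show (a i0).factorization 2 = E from hi0E] at this
    have huodd : u % 2 = 1 := by
      rcases Nat.even_or_odd u with he | ho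
      · exfalso
        obtain ⟨v, hv⟩ := he
        exact hunotdvd ⟨v, by rw [hu, hv]; ring⟩
      · exact Nat.odd_iff.mp ho
    have hj2dvd : 2 ^ (E+1) ∣ a (i0 + 2 ^ E) := by
      have heq : a (i0 + 2 ^ E) = 2 ^ E * (u + n) := by
        simp only [ha]
        rw [show m + (i0 + 2 ^ E) * n = (m + i0 * n) + 2 ^ E * n by ring]
        rw [show m + i0 * n = a i0 from rfl, hu]
        ring
      rw [heq, pow_succ]
      have : 2 ∣ u + n := by omega
      obtain ⟨w, hw⟩ := this
      exact ⟨w, by rw [hw]; ring⟩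
    have : E + 1 ≤ V (i0 + 2 ^ E) := by
      rw [hV]
      exact (Nat.Prime.pow_dvd_iff_le_factorization Nat.prime_two (hane _)).mp hj2dvd
    have := hle _ hj2
    omega
  exact not_dvd_of_unique_max hm Nat.prime_two hi0s (by rw [show (m + i0*n).factorization 2 = V i0 from rfl]; omega)
    (fun i hi hne => huniq i hi hne)

lemma two_case {k m : ℕ} (hk : 2 ≤ k) (hm : 1 ≤ m) (hmk : m ≤ k) (hmo : m % 2 = 1) :
    ¬ DD k m 2 ∣ NN k m 2 := by
  obtain ⟨p, hp, hkp, hp2k⟩ := Nat.exists_prime_lt_and_le_two_mul k (by omega)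
  have hpodd : p % 2 = 1 := Nat.odd_iff.mp (hp.odd_of_ne_two (by omega))
  set i0 : ℕ := (p - m) / 2 with hi0def
  have h2i0 : 2 * i0 = p - m := by omega
  have hai0 : m + i0 * 2 = p := by omega
  have hi0mem : i0 ∈ range (k+1) := by
    rw [Finset.mem_range]; omega
  apply not_dvd_of_unique_max hm hp hi0mem
  · rw [hai0, Nat.Prime.factorization_self hp]
  · intro i hi hne
    rw [hai0, Nat.Prime.factorization_self hp]
    rw [Finset.mem_range] at hi
    -- show factorization is 0
    have : ¬ p ∣ (m + i * 2) := by
      intro hdvd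
      obtain ⟨t, ht⟩ := hdvd
      -- m + 2i is odd, ≤ 3k, p > k
      have hodd : (m + i * 2) % 2 = 1 := by omega
      have hle : m + i * 2 ≤ 3 * k := by omega
      have ht1 : t ≠ 0 := by
        intro h; rw [h, Nat.mul_zero] at ht; omega
      have htodd : t % 2 = 1 := by
        rcases Nat.even_or_odd t with he | ho
        · exfalso; obtain ⟨v, hv⟩ := he
          rw [ht, hv, show p * (v + v) = 2 * (p * v) by ring] at hodd
          omega
        · exact Nat.odd_iff.mp ho
      have : t = 1 ∨ 3 ≤ t := by omega
      rcases this with rfl | h3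
      · rw [Nat.mul_one] at ht
        exact hne (by omega)
      · have : 3 * p ≤ p * t := by
          calc 3 * p = p * 3 := by ring
          _ ≤ p * t := Nat.mul_le_mul_left p h3
        omega
    rw [Nat.factorization_eq_zero_of_not_dvd this]
    omega

lemma aux_pow (s : ℕ) : (s+1)^2 ≤ 3 * 2^s + 1 := by
  induction s with
  | zero => norm_num
  | succ s ih =>
    have hlt : s < 2 ^ s := Nat.lt_two_pow_self
    have h3 : 2*s+3 ≤ 3*2^s := by omega
    have hexp : (s+2)^2 = (s+1)^2 + (2*s + 3) := by ring
    rw [hexp]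
    have h1 : (s+1)^2 + (2*s+3) ≤ (3*2^s + 1) + (3*2^s) := by omega
    have h2 : (3*2^s + 1) + (3*2^s) = 3 * 2^(s+1) + 1 := by ring
    omega

lemma factorial_two_adic {k : ℕ} (hk : 2 ≤ k) : k / 2 ≤ (k !).factorization 2 := by
  haveI : Fact (Nat.Prime 2) := ⟨Nat.prime_two⟩
  rw [Nat.factorization_def _ Nat.prime_two,
    padicValNat_factorial (b := Nat.log 2 k + 1) (Nat.lt_succ_self _)]
  have h1 : (1:ℕ) ∈ Ico 1 (Nat.log 2 k + 1) := by
    rw [mem_Ico]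
    constructor
    · exact le_refl 1
    · have : 0 < Nat.log 2 k := Nat.log_pos (by norm_num) (by omega)
      omega
  calc k / 2 = k / 2 ^ 1 := by norm_num
  _ ≤ ∑ i ∈ Ico 1 (Nat.log 2 k + 1), k / 2 ^ i := Finset.single_le_sum (f := fun i => k / 2 ^ i) (fun i _ => Nat.zero_le _) h1

-- number of indices j ≤ k in an AP hit by p^t

lemma ap_count {k m n p t : ℕ} (hp : p.Prime) (ht : 1 ≤ t) (hpn : ¬ p ∣ n) :
    #((range (k+1)).filter (fun j => p^t ∣ m + j * n)) ≤ k / p^t + 1 := by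
  have hpt : 0 < p ^ t := Nat.pow_pos hp.pos
  have : #((range (k+1)).filter (fun j => p^t ∣ m + j * n)) ≤ #(range (k / p^t + 1)) := by
    apply Finset.card_le_card_of_injOn (fun j => j / p^t)
    · intro j hj
      rw [Finset.mem_coe, Finset.mem_filter, Finset.mem_range] at hj
      rw [Finset.mem_coe, Finset.mem_range]
      beta_reduce
      have : j / p^t ≤ k / p^t := Nat.div_le_div_right (by omega)
      omega
    · intro j1 h1 j2 h2 heq
      simp only [Finset.coe_filter, Set.mem_setOf_eq, Finset.mem_range] at h1 h2
      simp only [] at heq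
      rcases Nat.lt_or_ge j1 j2 with h | h
      case _ =>
        exfalso
        obtain ⟨d, rfl⟩ : ∃ d, j2 = j1 + (d+1) := ⟨j2 - j1 - 1, by omega⟩
        have hdvd : p^t ∣ (d+1) * n := by
          have hx : m + (j1 + (d+1)) * n = (m + j1 * n) + (d+1)*n := by ring
          have := h2.2
          rw [hx] at this
          exact (Nat.dvd_add_right h1.2).mp this
        have hcop : Nat.Coprime (p ^ t) n :=
          Nat.Coprime.pow_left _ ((Nat.Prime.coprime_iff_not_dvd hp).mpr hpn)
        have hdd : p ^ t ∣ d + 1 := hcop.dvd_of_dvd_mul_right hdvd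
        have : p ^ t ≤ d + 1 := Nat.le_of_dvd (by omega) hdd
        have : j1 / p^t + 1 ≤ (j1 + (d+1)) / p^t := by
          calc j1 / p^t + 1 = (j1 + p^t) / p^t := (Nat.add_div_right j1 hpt).symm
          _ ≤ (j1 + (d+1)) / p^t := Nat.div_le_div_right (by omega)
        omega
      case _ =>
        rcases Nat.lt_or_ge j2 j1 with h' | h'
        · exfalso
          obtain ⟨d, rfl⟩ : ∃ d, j1 = j2 + (d+1) := ⟨j1 - j2 - 1, by omega⟩
          have hdvd : p^t ∣ (d+1) * n := by
            have hx : m + (j2 + (d+1)) * n = (m + j2 * n) + (d+1)*n := by ring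
            have := h1.2
            rw [hx] at this
            exact (Nat.dvd_add_right h2.2).mp this
          have hcop : Nat.Coprime (p ^ t) n :=
            Nat.Coprime.pow_left _ ((Nat.Prime.coprime_iff_not_dvd hp).mpr hpn)
          have hdd : p ^ t ∣ d + 1 := hcop.dvd_of_dvd_mul_right hdvd
          have : p ^ t ≤ d + 1 := Nat.le_of_dvd (by omega) hdd
          have : j2 / p^t + 1 ≤ (j2 + (d+1)) / p^t := by
            calc j2 / p^t + 1 = (j2 + p^t) / p^t := (Nat.add_div_right j2 hpt).symm
            _ ≤ (j2 + (d+1)) / p^t := Nat.div_le_div_right (by omega)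
          omega
        · omega
  simpa using this

lemma smooth_impossible {k m n : ℕ} (hk : 2 ≤ k) (hm : 1 ≤ m) (hmo : m % 2 = 1)
    (hn4 : 4 ≤ n) (hne : n % 2 = 0) (hco : Nat.Coprime m n)
    (hsm : ∀ p : ℕ, p.Prime → ∀ j ∈ range (k+1), p ^ ((m + j*n).factorization p) ≤ k) :
    False := by
  set s : Finset ℕ := range (k+1) with hs
  set a : ℕ → ℕ := fun j => m + j * n with ha
  have hane : ∀ j, a j ≠ 0 := fun j => (term_pos hm j n).ne'
  set A : ℕ := ∏ j ∈ s, a j with hA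
  have hAne : A ≠ 0 := (Finset.prod_pos fun j _ => term_pos hm j n).ne'
  -- lower bound : n^k * k! < A
  have hlow : n ^ k * k ! < A := by
    have h1 : ∏ j ∈ Icc 1 k, (j * n) < ∏ j ∈ Icc 1 k, a j := by
      apply Finset.prod_lt_prod_of_nonempty
      · intro j hj; rw [mem_Icc] at hj
        exact Nat.mul_pos (by omega) (by omega)
      · intro j hj; simp only [ha]; omega
      · exact ⟨1, by rw [mem_Icc]; omega⟩
    have h2 : ∏ j ∈ Icc 1 k, (j * n) = k ! * n ^ k := by
      rw [Finset.prod_mul_distrib, ← Finset.Ico_add_one_right_eq_Icc, Finset.prod_Ico_id_eq_factorial,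
        Finset.prod_const, Nat.card_Ico]
      norm_num
    have h3 : ∏ j ∈ Icc 1 k, a j ≤ A := by
      apply Finset.prod_le_prod_of_subset_of_one_le'
      · intro j hj; rw [mem_Icc] at hj; rw [hs, mem_range]; omega
      · intro j _ _; exact term_pos hm j n
    have h4 : n ^ k * k ! = k ! * n ^ k := Nat.mul_comm _ _
    omega
  -- all terms odd
  have haodd : ∀ j, a j % 2 = 1 := by
    intro j
    have h2 : 2 ∣ j * n := Dvd.dvd.mul_left (by omega : 2 ∣ n) j
    simp only [ha]; omega
  -- prime factors of A
  set S : Finset ℕ := A.primeFactors with hS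
  have hSprime : ∀ p ∈ S, p.Prime := fun p hp => Nat.prime_of_mem_primeFactors hp
  have hSdvd_term : ∀ p ∈ S, ∃ j ∈ s, p ∣ a j := by
    intro p hp
    have hd := Nat.dvd_of_mem_primeFactors hp
    exact ((hSprime p hp).prime.dvd_finset_prod_iff _).mp hd
  have hSodd : ∀ p ∈ S, p ≠ 2 := by
    intro p hp h2; subst h2
    obtain ⟨j, hj, hd⟩ := hSdvd_term 2 hp
    have := haodd j; omega
  have hSk : ∀ p ∈ S, p ≤ k := by
    intro p hp
    obtain ⟨j, hj, hd⟩ := hSdvd_term p hp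
    have h1 : 1 ≤ (a j).factorization p :=
      ((hSprime p hp).dvd_iff_one_le_factorization (hane j)).mp hd
    calc p = p ^ 1 := (pow_one p).symm
    _ ≤ p ^ ((a j).factorization p) := Nat.pow_le_pow_right (hSprime p hp).pos h1
    _ ≤ k := hsm p (hSprime p hp) j hj
  have hSpn : ∀ p ∈ S, ¬ p ∣ n := by
    intro p hp hdvd
    obtain ⟨j, hj, hd⟩ := hSdvd_term p hp
    have hpm : p ∣ m := by
      have h1 : p ∣ j * n := Dvd.dvd.mul_left hdvd j
      have := Nat.dvd_sub hd h1
      simpa [ha] using this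
    have hg : p ∣ Nat.gcd m n := Nat.dvd_gcd hpm hdvd
    rw [hco] at hg
    have hple : p ≤ 1 := Nat.le_of_dvd one_pos hg
    have := (hSprime p hp).two_le; omega
  -- exponents
  set e : ℕ → ℕ := fun p => s.sup (fun j => (a j).factorization p) with he
  have he1 : ∀ p ∈ S, 1 ≤ e p := by
    intro p hp
    obtain ⟨j, hj, hd⟩ := hSdvd_term p hp
    calc 1 ≤ (a j).factorization p :=
          ((hSprime p hp).dvd_iff_one_le_factorization (hane j)).mp hd
    _ ≤ e p := Finset.le_sup (f := fun j => (a j).factorization p) hj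
  have hek : ∀ p ∈ S, p ^ (e p) ≤ k := by
    intro p hp
    obtain ⟨j, hj, hej⟩ := Finset.exists_mem_eq_sup s ⟨0, by simp [hs]⟩
      (fun j => (a j).factorization p)
    rw [show e p = (a j).factorization p from hej]
    exact hsm p (hSprime p hp) j hj
  -- main per-prime bound
  have hmain : ∀ p ∈ S, A.factorization p ≤ (k !).factorization p + e p := by
    intro p hpS
    have hp := hSprime p hpS
    haveI : Fact p.Prime := ⟨hp⟩
    have hAf : A.factorization p = ∑ j ∈ s, (a j).factorization p := by
      rw [hA, Nat.factorization_prod (fun j _ => hane j)]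
      exact Finset.sum_apply' p
    have hVle : ∀ j ∈ s, (a j).factorization p ≤ e p := fun j hj =>
      Finset.le_sup (f := fun j => (a j).factorization p) hj

    have hstep1 : ∀ j ∈ s, (a j).factorization p
        = #((Icc 1 (e p)).filter (fun t => p ^ t ∣ a j)) := by
      intro j hj
      have heq : (Icc 1 (e p)).filter (fun t => p ^ t ∣ a j)
          = Icc 1 ((a j).factorization p) := by
        ext t
        simp only [mem_filter, mem_Icc]
        constructor
        · rintro ⟨⟨h1, _⟩, hd⟩
          exact ⟨h1, (hp.pow_dvd_iff_le_factorization (hane j)).mp hd⟩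
        · rintro ⟨h1, h2⟩
          exact ⟨⟨h1, le_trans h2 (hVle j hj)⟩,
            (hp.pow_dvd_iff_le_factorization (hane j)).mpr h2⟩
      rw [heq, Nat.card_Icc]
      omega
    have hswap : ∑ j ∈ s, (a j).factorization p
        = ∑ t ∈ Icc 1 (e p), #(s.filter (fun j => p ^ t ∣ a j)) := by
      calc ∑ j ∈ s, (a j).factorization p
          = ∑ j ∈ s, ∑ t ∈ Icc 1 (e p), (if p ^ t ∣ a j then 1 else 0) := by
            apply Finset.sum_congr rfl
            intro j hj
            rw [hstep1 j hj, Finset.card_filter]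
      _ = ∑ t ∈ Icc 1 (e p), ∑ j ∈ s, (if p ^ t ∣ a j then 1 else 0) := Finset.sum_comm
      _ = ∑ t ∈ Icc 1 (e p), #(s.filter (fun j => p ^ t ∣ a j)) := by
            apply Finset.sum_congr rfl
            intro t _
            rw [Finset.card_filter]
    have hbound : ∀ t ∈ Icc 1 (e p), #(s.filter (fun j => p ^ t ∣ a j)) ≤ k / p ^ t + 1 := by
      intro t htm; rw [mem_Icc] at htm
      exact ap_count hp htm.1 (hSpn p hpS)
    have hleg : (k !).factorization p
        = ∑ i ∈ Ico 1 (max (e p + 1) (Nat.log p k + 1)), k / p ^ i := by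
      rw [Nat.factorization_def _ hp]
      exact padicValNat_factorial (lt_of_lt_of_le (Nat.lt_succ_self _) (le_max_right _ _))
    calc A.factorization p = ∑ j ∈ s, (a j).factorization p := hAf
    _ = ∑ t ∈ Icc 1 (e p), #(s.filter (fun j => p ^ t ∣ a j)) := hswap
    _ ≤ ∑ t ∈ Icc 1 (e p), (k / p ^ t + 1) := Finset.sum_le_sum hbound
    _ = (∑ t ∈ Icc 1 (e p), k / p ^ t) + e p := by
        rw [Finset.sum_add_distrib, Finset.sum_const, Nat.card_Icc]
        simp
    _ ≤ (k !).factorization p + e p := by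
        apply Nat.add_le_add_right
        rw [hleg]
        apply Finset.sum_le_sum_of_subset
        intro t htm
        rw [mem_Icc] at htm
        rw [mem_Ico]
        constructor
        · exact htm.1
        · calc t < e p + 1 := by omega
          _ ≤ max (e p + 1) (Nat.log p k + 1) := le_max_left _ _
  -- A as product over its prime factors
  have hAeq : A = ∏ p ∈ S, p ^ (A.factorization p) := by
    conv_lhs => rw [← Nat.factorization_prod_pow_eq_self hAne]
    rw [Nat.prod_factorization_eq_prod_primeFactors]
  -- upper bound on A
  have hAle : A ≤ (∏ p ∈ S, p ^ ((k !).factorization p)) * ∏ p ∈ S, p ^ (e p) := by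
    calc A = ∏ p ∈ S, p ^ (A.factorization p) := hAeq
    _ ≤ ∏ p ∈ S, p ^ ((k !).factorization p + e p) := by
        apply Finset.prod_le_prod'
        intro p hp
        exact Nat.pow_le_pow_right (hSprime p hp).pos (hmain p hp)
    _ = (∏ p ∈ S, p ^ ((k !).factorization p)) * ∏ p ∈ S, p ^ (e p) := by
        rw [← Finset.prod_mul_distrib]
        apply Finset.prod_congr rfl
        intro p _
        rw [pow_add]
  -- the factorial part
  set v2 : ℕ := (k !).factorization 2 with hv2def
  have hX : 2 ^ v2 * ∏ p ∈ S, p ^ ((k !).factorization p) ∣ k ! := by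
    have h2S : 2 ∉ S := fun h => (hSodd 2 h) rfl
    have hsub : insert 2 S ⊆ (k !).primeFactors := by
      intro p hp
      rcases Finset.mem_insert.mp hp with rfl | hpS
      · exact Nat.mem_primeFactors.mpr
          ⟨Nat.prime_two, Nat.dvd_factorial (by norm_num) hk, Nat.factorial_ne_zero k⟩
      · exact Nat.mem_primeFactors.mpr
          ⟨hSprime p hpS, Nat.dvd_factorial (hSprime p hpS).pos (hSk p hpS),
            Nat.factorial_ne_zero k⟩
    have hdvd : ∏ p ∈ insert 2 S, p ^ ((k !).factorization p)
        ∣ ∏ p ∈ (k !).primeFactors, p ^ ((k !).factorization p) :=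
      Finset.prod_dvd_prod_of_subset _ _ _ hsub
    rw [Finset.prod_insert h2S] at hdvd
    have hfac : ∏ p ∈ (k !).primeFactors, p ^ ((k !).factorization p) = k ! := by
      rw [← Nat.prod_factorization_eq_prod_primeFactors]
      exact Nat.factorization_prod_pow_eq_self (Nat.factorial_ne_zero k)
    rwa [hfac] at hdvd
  -- split prime part
  have hYsplit : ∏ p ∈ S, p ^ (e p) = (∏ p ∈ S, p) * ∏ p ∈ S, p ^ (e p - 1) := by
    rw [← Finset.prod_mul_distrib]
    apply Finset.prod_congr rfl
    intro p hp
    have h1 := he1 p hp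
    calc p ^ e p = p ^ ((e p - 1) + 1) := by congr 1; omega
    _ = p ^ (e p - 1) * p := pow_succ p _
    _ = p * p ^ (e p - 1) := Nat.mul_comm _ _
  have hprimor : ∏ p ∈ S, p ≤ 4 ^ k := by
    have hdvd : ∏ p ∈ S, p ∣ primorial k := by
      have hsub : S ⊆ (range (k+1)).filter Nat.Prime := by
        intro p hp
        rw [mem_filter, mem_range]
        exact ⟨by have := hSk p hp; omega, hSprime p hp⟩
      unfold primorial
      exact Finset.prod_dvd_prod_of_subset _ _ _ hsub
    calc ∏ p ∈ S, p ≤ primorial k :=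
          Nat.le_of_dvd (primorial_pos k) hdvd
    _ ≤ 4 ^ k := primorial_le_4_pow k
  -- bound the excess Q
  have hQ : ∏ p ∈ S, p ^ (e p - 1) ≤ 2 ^ (k / 2) := by
    set sk : ℕ := Nat.sqrt k with hsk
    set S2 : Finset ℕ := S.filter (fun p => 2 ≤ e p) with hS2
    have hQeq : ∏ p ∈ S, p ^ (e p - 1) = ∏ p ∈ S2, p ^ (e p - 1) := by
      rw [← Finset.prod_filter_mul_prod_filter_not S (fun p => 2 ≤ e p)]
      have hone : ∏ p ∈ S.filter (fun p => ¬ 2 ≤ e p), p ^ (e p - 1) = 1 := by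
        apply Finset.prod_eq_one
        intro p hp
        rw [mem_filter] at hp
        have h1 := he1 p hp.1
        have : e p - 1 = 0 := by omega
        rw [this, pow_zero]
      rw [hone, mul_one]
    have hS2sqrt : ∀ p ∈ S2, p ≤ sk := by
      intro p hp
      rw [mem_filter] at hp
      rw [hsk, Nat.le_sqrt]
      calc p * p = p ^ 2 := (sq p).symm
      _ ≤ p ^ (e p) := Nat.pow_le_pow_right (hSprime p hp.1).pos hp.2
      _ ≤ k := hek p hp.1
    have hS2three : ∀ p ∈ S2, 3 ≤ p := by
      intro p hp
      rw [mem_filter] at hp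
      have h2 := (hSprime p hp.1).two_le
      have h3 := hSodd p hp.1
      omega
    have hcard : #S2 ≤ (sk - 1) / 2 := by
      have : #S2 ≤ #(Icc 1 ((sk - 1) / 2)) := by
        apply Finset.card_le_card_of_injOn (fun p => (p - 1) / 2)
        · intro p hp
          rw [Finset.mem_coe, mem_Icc]
          beta_reduce
          have h3 := hS2three p hp
          have hsq := hS2sqrt p hp
          constructor
          · omega
          · omega
        · intro p hp q hq heq
          simp only [] at heq
          rw [Finset.mem_coe, hS2, mem_filter] at hp hq
          have hpo : p % 2 = 1 := Nat.odd_iff.mp ((hSprime p hp.1).odd_of_ne_two (hSodd p hp.1))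
          have hqo : q % 2 = 1 := Nat.odd_iff.mp ((hSprime q hq.1).odd_of_ne_two (hSodd q hq.1))
          have h3p := (hSprime p hp.1).two_le
          have h3q := (hSprime q hq.1).two_le
          omega
      rwa [Nat.card_Icc, show (sk-1)/2 + 1 - 1 = (sk-1)/2 from by omega] at this
    have hterm : ∀ p ∈ S2, p ^ (e p - 1) ≤ k / 3 := by
      intro p hp
      rw [Nat.le_div_iff_mul_le (by norm_num)]
      have hps := hS2three p hp
      rw [mem_filter] at hp
      calc p ^ (e p - 1) * 3 ≤ p ^ (e p - 1) * p := Nat.mul_le_mul_left _ hps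
      _ = p ^ (e p) := by
          rw [← pow_succ]
          congr 1
          have := he1 p hp.1
          omega
      _ ≤ k := hek p hp.1
    have hk3 : k / 3 ≤ 2 ^ sk := by
      have h1 : k < (sk + 1) ^ 2 := by
        have := Nat.lt_succ_sqrt k
        rw [hsk]
        calc k < (Nat.sqrt k).succ * (Nat.sqrt k).succ := Nat.lt_succ_sqrt k
        _ = (Nat.sqrt k + 1) ^ 2 := by rw [Nat.succ_eq_add_one]; ring
      have h2 := aux_pow sk
      have h3 : k ≤ 3 * 2 ^ sk := by omega
      calc k / 3 ≤ (3 * 2 ^ sk) / 3 := Nat.div_le_div_right h3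
      _ = 2 ^ sk := by omega
    have hexp : sk * #S2 ≤ k / 2 := by
      have h1 : sk * #S2 ≤ sk * ((sk - 1) / 2) := Nat.mul_le_mul_left _ hcard
      have h2 : sk * ((sk - 1) / 2) ≤ (sk * (sk - 1)) / 2 := Nat.mul_div_le_mul_div_assoc _ _ _
      have h3 : sk * (sk - 1) ≤ k := by
        calc sk * (sk - 1) ≤ sk * sk := Nat.mul_le_mul_left _ (by omega)
        _ ≤ k := hsk ▸ Nat.sqrt_le k
      have h4 : (sk * (sk - 1)) / 2 ≤ k / 2 := Nat.div_le_div_right h3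
      omega
    calc ∏ p ∈ S, p ^ (e p - 1) = ∏ p ∈ S2, p ^ (e p - 1) := hQeq
    _ ≤ (k / 3) ^ #S2 := Finset.prod_le_pow_card _ _ _ hterm
    _ ≤ (2 ^ sk) ^ #S2 := Nat.pow_le_pow_left hk3 _
    _ = 2 ^ (sk * #S2) := by rw [← pow_mul]
    _ ≤ 2 ^ (k / 2) := Nat.pow_le_pow_right (by norm_num) hexp
  -- final assembly
  have hv2 : k / 2 ≤ v2 := factorial_two_adic hk
  have hfin1 : A * 2 ^ v2 ≤ k ! * (4 ^ k * 2 ^ (k / 2)) := by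
    calc A * 2 ^ v2
        ≤ ((∏ p ∈ S, p ^ ((k !).factorization p)) * ∏ p ∈ S, p ^ (e p)) * 2 ^ v2 :=
          Nat.mul_le_mul_right _ hAle
    _ = (2 ^ v2 * ∏ p ∈ S, p ^ ((k !).factorization p)) * ∏ p ∈ S, p ^ (e p) := by ring
    _ ≤ k ! * ∏ p ∈ S, p ^ (e p) := by
        apply Nat.mul_le_mul_right
        exact Nat.le_of_dvd (Nat.factorial_pos k) hX
    _ = k ! * ((∏ p ∈ S, p) * ∏ p ∈ S, p ^ (e p - 1)) := by rw [hYsplit]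
    _ ≤ k ! * (4 ^ k * 2 ^ (k / 2)) := by
        apply Nat.mul_le_mul_left
        exact Nat.mul_le_mul hprimor hQ
  have hfin2 : k ! * (4 ^ k * 2 ^ (k / 2)) ≤ (n ^ k * k !) * 2 ^ v2 := by
    have h4n : 4 ^ k ≤ n ^ k := Nat.pow_le_pow_left hn4 k
    have h2v : 2 ^ (k / 2) ≤ 2 ^ v2 := Nat.pow_le_pow_right (by norm_num) hv2
    calc k ! * (4 ^ k * 2 ^ (k / 2)) ≤ k ! * (n ^ k * 2 ^ v2) :=
      Nat.mul_le_mul_left _ (Nat.mul_le_mul h4n h2v)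
    _ = (n ^ k * k !) * 2 ^ v2 := by ring
  have hfin3 : (n ^ k * k !) * 2 ^ v2 < A * 2 ^ v2 :=
    (Nat.mul_lt_mul_right (by positivity : (0:ℕ) < 2 ^ v2)).mpr hlow
  omega

lemma big_even_case {k m n : ℕ} (hk : 2 ≤ k) (hm : 1 ≤ m) (hmo : m % 2 = 1)
    (hn4 : 4 ≤ n) (hne : n % 2 = 0) (hco : Nat.Coprime m n) :
    ¬ DD k m n ∣ NN k m n := by
  by_cases hsm : ∀ p : ℕ, p.Prime → ∀ j ∈ range (k+1), p ^ ((m + j*n).factorization p) ≤ k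
  · exact absurd (smooth_impossible hk hm hmo hn4 hne hco hsm) (fun h => h)
  push_neg at hsm
  obtain ⟨p, hp, j1, hj1, hbig⟩ := hsm
  set s : Finset ℕ := range (k+1) with hs
  set a : ℕ → ℕ := fun j => m + j * n with ha
  have hane : ∀ j, a j ≠ 0 := fun j => (term_pos hm j n).ne'
  set V : ℕ → ℕ := fun j => (a j).factorization p with hV
  -- V j1 ≥ 1
  have hVj1 : 1 ≤ V j1 := by
    by_contra h
    have h0 : V j1 = 0 := by omega
    rw [hV] at h0
    simp only [ha] at h0
    rw [show (m + j1 * n).factorization p = 0 from h0, pow_zero] at hbig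
    omega
  -- p does not divide n
  have hpn : ¬ p ∣ n := by
    intro hdvd
    have hpa : p ∣ a j1 := by
      rw [hV] at hVj1
      exact (Nat.Prime.dvd_iff_one_le_factorization hp (hane j1)).mpr hVj1
    have hpm : p ∣ m := by
      have : p ∣ j1 * n := Dvd.dvd.mul_left hdvd j1
      have := Nat.dvd_sub hpa this
      simpa [ha] using this
    have : p ∣ Nat.gcd m n := Nat.dvd_gcd hpm hdvd
    rw [hco] at this
    exact Nat.Prime.one_lt hp |>.ne' (Nat.le_antisymm (Nat.le_of_dvd one_pos this) hp.one_lt.le |> fun h => h)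
  -- maximizer
  set E : ℕ := s.sup V with hEdef
  have hle : ∀ j ∈ s, V j ≤ E := fun j hj => Finset.le_sup hj
  obtain ⟨i0, hi0s, hi0E⟩ := Finset.exists_mem_eq_sup s ⟨0, by simp [hs]⟩ V
  have hE1 : 1 ≤ E := le_trans hVj1 (hle j1 hj1)
  have hkE : k < p ^ E := by
    calc k < p ^ (V j1) := hbig
    _ ≤ p ^ E := Nat.pow_le_pow_right hp.pos (hle j1 hj1)
  -- uniqueness
  have key : ∀ i i' : ℕ, i ∈ s → i' ∈ s → i < i' → V i = E → V i' = E → False := by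
    intro i i' hi hi' hlt hiE hi'E
    have hd1 : p ^ E ∣ a i := by
      rw [Nat.Prime.pow_dvd_iff_le_factorization hp (hane i)]
      exact le_of_eq hiE.symm
    have hd2 : p ^ E ∣ a i' := by
      rw [Nat.Prime.pow_dvd_iff_le_factorization hp (hane i')]
      exact le_of_eq hi'E.symm
    obtain ⟨d, rfl⟩ : ∃ d, i' = i + (d + 1) := ⟨i' - i - 1, by omega⟩
    have hdiff : a (i + (d+1)) = a i + (d+1) * n := by simp [ha]; ring
    have hdvd_diff : p ^ E ∣ (d+1) * n := by
      have : p ^ E ∣ a i + (d+1) * n := hdiff ▸ hd2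
      exact (Nat.dvd_add_right hd1).mp this
    have hcop : Nat.Coprime (p ^ E) n := by
      apply Nat.Coprime.pow_left
      exact (Nat.Prime.coprime_iff_not_dvd hp).mpr hpn
    have hdvd_d : p ^ E ∣ d + 1 := (Nat.Coprime.dvd_of_dvd_mul_right hcop) hdvd_diff
    have h1 : p ^ E ≤ d + 1 := Nat.le_of_dvd (by omega) hdvd_d
    have h2 : i + (d+1) ∈ s := hi'
    simp only [hs, Finset.mem_range] at h2
    omega
  apply not_dvd_of_unique_max hm hp hi0s
  · show 1 ≤ V i0
    omega
  · intro i hi hne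
    show V i < V i0
    rcases lt_or_ge (V i) (V i0) with h | h
    · exact h
    exfalso
    have hiE : V i = E := le_antisymm (hle i hi) (le_trans (le_of_eq hi0E) h)
    rcases Nat.lt_or_ge i i0 with hlt | hge
    · exact key i i0 hi hi0s hlt hiE hi0E.symm
    · have : i0 < i := by omega
      exact key i0 i hi0s hi this hi0E.symm hiE

lemma k_one_case {m n : ℕ} (hm : 1 ≤ m) (hn : 1 ≤ n) : ¬ DD 1 m n ∣ NN 1 m n := by
  have hD : DD 1 m n = m * (m + n) := by
    unfold DD
    rw [show (1:ℕ)+1 = 2 from rfl, Finset.prod_range_succ, Finset.prod_range_succ,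
      Finset.prod_range_zero]
    ring_nf
  have hN : NN 1 m n = (m + n) + m := by
    unfold NN
    rw [show (1:ℕ)+1 = 2 from rfl]
    rw [Finset.sum_range_succ, Finset.sum_range_succ, Finset.sum_range_zero]
    have h0 : (range 2).erase 0 = {1} := by decide
    have h1 : (range 2).erase 1 = {0} := by decide
    rw [h0, h1]
    simp
  intro hdvd
  rw [hD, hN] at hdvd
  rcases Nat.lt_or_ge m 2 with h1 | h2
  · -- m = 1 : n+1 ∣ n+2
    have hm1 : m = 1 := by omega
    subst hm1
    have : (1 + n) ∣ (1 + n) + 1 := by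
      have : (1+n) + 1 = (1 + n + 1) := rfl
      convert hdvd using 1
      omega
    have h2 := (Nat.dvd_add_right (dvd_refl (1+n))).mp this
    have := Nat.le_of_dvd one_pos h2
    omega
  · -- m ≥ 2 : 0 < N < D
    have hlt : (m + n) + m < m * (m + n) := by
      calc (m + n) + m < 2 * (m + n) := by omega
      _ ≤ m * (m + n) := Nat.mul_le_mul_right _ h2
    have := Nat.le_of_dvd (by omega) hdvd
    omega

theorem coprime_nagell {k m n : ℕ} (hk : 1 ≤ k) (hm : 1 ≤ m) (hn : 1 ≤ n) (hmk : m ≤ k)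
    (hco : Nat.Coprime m n) : ¬ DD k m n ∣ NN k m n := by
  rcases Nat.lt_or_ge k 2 with hk1 | hk2
  · have : k = 1 := by omega
    subst this
    exact k_one_case hm hn
  rcases Nat.even_or_odd n with he | ho
  · -- n even, so m odd
    have hne : n % 2 = 0 := Nat.even_iff.mp he
    have hmo : m % 2 = 1 := by
      rcases Nat.even_or_odd m with hme | hmo
      · exfalso
        have h2 : (2:ℕ) ∣ Nat.gcd m n := Nat.dvd_gcd hme.two_dvd he.two_dvd
        rw [hco] at h2
        omega
      · exact Nat.odd_iff.mp hmo
    rcases Nat.lt_or_ge n 4 with hn4 | hn4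
    · have : n = 2 := by omega
      subst this
      exact two_case hk2 hm hmk hmo
    · exact big_even_case hk2 hm hmo hn4 hne hco
  · exact odd_case hk hm (Nat.odd_iff.mp ho)

theorem nat_nagell {k m n : ℕ} (hk : 1 ≤ k) (hm : 1 ≤ m) (hn : 1 ≤ n) (hmk : m ≤ k) :
    ¬ DD k m n ∣ NN k m n := by
  intro hdvd
  set d : ℕ := Nat.gcd m n with hd
  have hdpos : 0 < d := Nat.gcd_pos_of_pos_left n (by omega)
  obtain ⟨m', hm'⟩ : d ∣ m := Nat.gcd_dvd_left m n
  obtain ⟨n', hn'⟩ : d ∣ n := Nat.gcd_dvd_right m n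
  have hq1 : m / d = m' := by rw [hm']; exact Nat.mul_div_cancel_left _ hdpos
  have hq2 : n / d = n' := by rw [hn']; exact Nat.mul_div_cancel_left _ hdpos
  have hco : Nat.Coprime m' n' := by
    have hcd := Nat.coprime_div_gcd_div_gcd (m := m) (n := n) (hd ▸ hdpos)
    rw [← hd, hq1, hq2] at hcd
    exact hcd
  have hm'1 : 1 ≤ m' := by
    rcases Nat.eq_zero_or_pos m' with h | h
    · rw [h, Nat.mul_zero] at hm'; omega
    · exact h
  have hn'1 : 1 ≤ n' := by
    rcases Nat.eq_zero_or_pos n' with h | h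
    · rw [h, Nat.mul_zero] at hn'; omega
    · exact h
  have hm'k : m' ≤ k := by
    have : m' ≤ m := by
      calc m' ≤ d * m' := Nat.le_mul_of_pos_left m' hdpos
      _ = m := hm'.symm
    omega
  -- transform DD and NN
  have hDD : DD k m n = d ^ (k+1) * DD k m' n' := by
    unfold DD
    have : ∀ j, m + j * n = d * (m' + j * n') := by
      intro j; rw [hm', hn']; ring
    rw [Finset.prod_congr rfl (fun j _ => this j), Finset.prod_mul_distrib,
      Finset.prod_const, Finset.card_range]
  have hNN : NN k m n = d ^ k * NN k m' n' := by
    unfold NN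
    rw [Finset.mul_sum]
    apply Finset.sum_congr rfl
    intro i hi
    have : ∀ j, m + j * n = d * (m' + j * n') := by
      intro j; rw [hm', hn']; ring
    rw [Finset.prod_congr rfl (fun j _ => this j), Finset.prod_mul_distrib,
      Finset.prod_const, Finset.card_erase_of_mem hi, Finset.card_range,
      Nat.add_sub_cancel]
  rw [hDD, hNN] at hdvd
  have hcancel : d * DD k m' n' ∣ NN k m' n' := by
    have h1 : d ^ k * (d * DD k m' n') ∣ d ^ k * NN k m' n' := by
      rwa [show d ^ k * (d * DD k m' n') = d ^ (k+1) * DD k m' n' by ring]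
    exact (mul_dvd_mul_iff_left (pow_ne_zero k (by omega : d ≠ 0))).mp h1
  have : DD k m' n' ∣ NN k m' n' := dvd_trans (Dvd.intro_left d rfl) hcancel
  exact coprime_nagell hk hm'1 hn'1 hm'k hco this


end NagellProof

open NagellProof

section RingSide

variable {R : Type*} [CommRing R] [LinearOrder R] [IsStrictOrderedRing R]

lemma one_le_of_pos (hdisc : ¬ ∃ x : R, 0 < x ∧ x < 1) {x : R} (hx : 0 < x) : 1 ≤ x := by
  by_contra h
  exact hdisc ⟨x, hx, lt_of_not_ge h⟩

lemma standard_of_le (hdisc : ¬ ∃ x : R, 0 < x ∧ x < 1) :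
    ∀ (c : ℕ) (x : R), 0 < x → x ≤ (c : R) → ∃ j : ℕ, 1 ≤ j ∧ j ≤ c ∧ x = (j : R) := by
  intro c
  induction c with
  | zero =>
    intro x hx hle
    exfalso
    simp only [Nat.cast_zero] at hle
    linarith
  | succ c ih =>
    intro x hx hle
    rcases le_or_gt x (c : R) with h | h
    · obtain ⟨j, h1, h2, h3⟩ := ih x hx h
      exact ⟨j, h1, by omega, h3⟩
    · have h1 : (0:R) < x - (c:R) := by linarith
      have h3 : 1 ≤ x - (c:R) := one_le_of_pos hdisc h1
      have h2 : x - (c:R) ≤ 1 := by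
        push_cast at hle
        linarith
      have hx1 : x = (c:R) + 1 := by linarith
      exact ⟨c+1, by omega, le_refl _, by push_cast; linarith⟩

lemma no_between (hdisc : ¬ ∃ x : R, 0 < x ∧ x < 1) {P S p : R} (hP : 0 < P)
    (q : ℕ) (h1 : (q : R) * P < S) (h2 : S < ((q : R) + 1) * P) (heq : S = p * P) : False := by
  rw [heq] at h1 h2
  have hq1 : (q:R) < p := (mul_lt_mul_iff_of_pos_right hP).mp h1
  have hq2 : p < (q:R) + 1 := (mul_lt_mul_iff_of_pos_right hP).mp h2
  have := one_le_of_pos hdisc (show (0:R) < p - q by linarith)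
  linarith

end RingSide

theorem nagell_in_discretely_ordered_ring
    {R : Type*} [CommRing R] [LinearOrder R] [IsStrictOrderedRing R]
    (hdisc : ¬ ∃ x : R, 0 < x ∧ x < 1)
    (k : ℕ) (hk : 1 ≤ k)
    (m n p : R) (hm : 0 < m) (hn : 0 < n) (hp : 0 ≤ p) :
    ∑ i ∈ Finset.range (k + 1),
        ∏ j ∈ (Finset.range (k + 1)).erase i, (m + (j : R) * n)
      ≠ p * ∏ j ∈ Finset.range (k + 1), (m + (j : R) * n) := by
  intro heq
  set B : ℕ → R := fun i => ∏ j ∈ (Finset.range (k + 1)).erase i, (m + (j : R) * n) with hB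
  set P : R := ∏ j ∈ Finset.range (k + 1), (m + (j : R) * n) with hP
  set S : R := ∑ i ∈ Finset.range (k + 1), B i with hS
  have hterm : ∀ j : ℕ, (0:R) < m + (j : R) * n := by
    intro j
    have : (0:R) ≤ (j : R) * n := mul_nonneg (Nat.cast_nonneg j) hn.le
    linarith
  have hBpos : ∀ i, 0 < B i := by
    intro i
    apply Finset.prod_pos
    intro j _
    exact hterm j
  have hPpos : 0 < P := by
    apply Finset.prod_pos
    intro j _
    exact hterm j
  have hSpos : 0 < S := by
    apply Finset.sum_pos
    · intro i _; exact hBpos i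
    · exact ⟨0, by simp⟩
  have hident : ∀ i ∈ Finset.range (k+1), (m + (i : R) * n) * B i = P := by
    intro i hi
    simp only [hB, hP]
    exact Finset.mul_prod_erase (Finset.range (k+1)) (fun j => m + (j:R) * n) hi
  rcases le_or_gt m (k : R) with hmk | hmk
  · -- m is standard
    obtain ⟨m₀, hm₀1, hm₀k, hm₀⟩ := standard_of_le hdisc k m hm hmk
    subst hm₀
    rcases le_or_gt n ((2*k : ℕ) : R) with hnk | hnk
    · -- n is standard as well : use the natural-number theorem
      obtain ⟨n₀, hn₀1, hn₀k, hn₀⟩ := standard_of_le hdisc (2*k) n hn hnk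
      subst hn₀
      have hPc : P = ((DD k m₀ n₀ : ℕ) : R) := by
        rw [hP, DD, Nat.cast_prod]
        apply Finset.prod_congr rfl
        intro j _
        push_cast
        ring
      have hSc : S = ((NN k m₀ n₀ : ℕ) : R) := by
        rw [hS, NN, Nat.cast_sum]
        apply Finset.sum_congr rfl
        intro i _
        rw [hB, Nat.cast_prod]
        apply Finset.prod_congr rfl
        intro j _
        push_cast
        ring
      have hnd := nat_nagell hk hm₀1 hn₀1 hm₀k
      have hDpos : 0 < DD k m₀ n₀ := DD_pos hm₀1
      set q : ℕ := NN k m₀ n₀ / DD k m₀ n₀ with hq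
      have hmod : NN k m₀ n₀ % DD k m₀ n₀ ≠ 0 := fun h => hnd (Nat.dvd_of_mod_eq_zero h)
      have hdm := Nat.div_add_mod (NN k m₀ n₀) (DD k m₀ n₀)
      rw [← hq] at hdm
      have hmlt := Nat.mod_lt (NN k m₀ n₀) hDpos
      have hlow : q * DD k m₀ n₀ < NN k m₀ n₀ := by
        have h1 : DD k m₀ n₀ * q = q * DD k m₀ n₀ := Nat.mul_comm _ _
        omega
      have hhigh : NN k m₀ n₀ < (q + 1) * DD k m₀ n₀ := by
        have h1 : DD k m₀ n₀ * q = q * DD k m₀ n₀ := Nat.mul_comm _ _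
        have h2 : (q+1) * DD k m₀ n₀ = q * DD k m₀ n₀ + DD k m₀ n₀ := by ring
        omega
      apply no_between hdisc hPpos q ?_ ?_ heq
      · rw [hPc, hSc]
        exact_mod_cast hlow
      · rw [hPc, hSc]
        have hcast := Nat.cast_lt (α := R) |>.mpr hhigh
        push_cast at hcast ⊢
        linarith
    · -- n is large : n ≥ 2k + 1
      have hn2k : ((2*k : ℕ) : R) + 1 ≤ n := by
        have h0 : (0:R) < n - ((2*k:ℕ):R) := by linarith
        have := one_le_of_pos hdisc h0
        linarith
      -- bound for indices i ≥ 1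
      have hbig : ∀ i ∈ (Finset.range (k+1)).erase 0, ((2*k : ℕ) : R) < (m₀ : R) + (i : R) * n := by
        intro i hi
        have hi1 : 1 ≤ i := by
          have := Finset.mem_erase.mp hi
          omega
        have hcast : (1:R) ≤ (i:R) := by exact_mod_cast hi1
        have h1 : n ≤ (i:R) * n := by
          nlinarith
        have hm0 : (1:R) ≤ (m₀ : R) := by exact_mod_cast hm₀1
        push_cast at hn2k ⊢
        nlinarith
      have hkpos : (0:R) < (k:ℕ) := by exact_mod_cast hk
      have hS'pos : 0 < ∑ i ∈ (Finset.range (k+1)).erase 0, B i := by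
        apply Finset.sum_pos
        · intro i _; exact hBpos i
        · refine ⟨1, ?_⟩
          rw [Finset.mem_erase, Finset.mem_range]
          omega
      have hsum_small2 : 2 * (∑ i ∈ (Finset.range (k+1)).erase 0, B i) < P := by
        have heach : ∀ i ∈ (Finset.range (k+1)).erase 0, ((2*k:ℕ):R) * B i < P := by
          intro i hi
          calc ((2*k:ℕ):R) * B i < ((m₀ : R) + (i : R) * n) * B i :=
                (mul_lt_mul_iff_of_pos_right (hBpos i)).mpr (hbig i hi)
          _ = P := hident i (Finset.mem_of_mem_erase hi)
        have hcard : #((Finset.range (k+1)).erase 0) = k := by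
          rw [Finset.card_erase_of_mem (by simp), Finset.card_range]
          omega
        have hsum : ∑ i ∈ (Finset.range (k+1)).erase 0, (((2*k:ℕ):R) * B i)
            < ∑ _i ∈ (Finset.range (k+1)).erase 0, P := by
          apply Finset.sum_lt_sum_of_nonempty
          · rw [← Finset.card_pos, hcard]; omega
          · exact heach
        rw [← Finset.mul_sum, Finset.sum_const, hcard, nsmul_eq_mul] at hsum
        have h2 : (k:R) * (2 * (∑ i ∈ (Finset.range (k+1)).erase 0, B i))
            < (k:R) * P := by
          calc (k:R) * (2 * (∑ i ∈ (Finset.range (k+1)).erase 0, B i))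
              = ((2*k:ℕ):R) * (∑ i ∈ (Finset.range (k+1)).erase 0, B i) := by
                push_cast; ring
          _ < (k:R) * P := hsum
        exact lt_of_mul_lt_mul_left h2 hkpos.le
      have hsum_small : ∑ i ∈ (Finset.range (k+1)).erase 0, B i < P := by
        linarith
      rcases Nat.lt_or_ge m₀ 2 with hm₀2 | hm₀2
      · -- m₀ = 1 : sandwich with q = 1
        have hm₀1' : m₀ = 1 := by omega
        subst hm₀1'
        have hB0 : B 0 = P := by
          have := hident 0 (by simp)
          simp only [Nat.cast_zero, Nat.cast_one, zero_mul, add_zero] at this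
          linarith
        have hsplit : S = B 0 + ∑ i ∈ (Finset.range (k+1)).erase 0, B i := by
          rw [hS, ← Finset.add_sum_erase _ _ (show 0 ∈ Finset.range (k+1) by simp)]
        apply no_between hdisc hPpos 1 ?_ ?_ heq
        · -- P < S
          push_cast
          rw [one_mul, hsplit, hB0]
          linarith
        · -- S < 2 P
          push_cast
          rw [hsplit, hB0]
          linarith [hsum_small]
      · -- m₀ ≥ 2 : sandwich with q = 0
        apply no_between hdisc hPpos 0 (by simpa using hSpos) ?_ heq
        push_cast
        rw [zero_add, one_mul]
        -- S < P : 2*S = 2*B0 + 2*Σ' ≤ P + 2*Σ' < P + P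
        have h2B0 : 2 * B 0 ≤ P := by
          have h2m : (2:R) ≤ (m₀ : R) + (0 : R) * n := by
            push_cast
            have : (2:R) ≤ (m₀:R) := by exact_mod_cast hm₀2
            linarith
          calc 2 * B 0 ≤ ((m₀ : R) + ((0:ℕ) : R) * n) * B 0 := by
                have := hBpos 0
                push_cast at h2m ⊢
                nlinarith
          _ = P := hident 0 (by simp)
        have hsplit : S = B 0 + ∑ i ∈ (Finset.range (k+1)).erase 0, B i := by
          rw [hS, ← Finset.add_sum_erase _ _ (show 0 ∈ Finset.range (k+1) by simp)]
        linarith [hsum_small2, hsplit, h2B0]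
  · -- m ≥ k + 1 : sandwich with q = 0
    have hmk1 : (k : R) + 1 ≤ m := by
      have h0 : (0:R) < m - (k:R) := by linarith
      have := one_le_of_pos hdisc h0
      linarith
    apply no_between hdisc hPpos 0 (by simpa using hSpos) ?_ heq
    push_cast
    rw [zero_add, one_mul]
    -- (k+1) * S < (k+1) * P
    have hkpos : (0:R) < (k:R) + 1 := by positivity
    have heach : ∀ i ∈ Finset.range (k+1), ((k:R)+1) * B i ≤ P := by
      intro i hi
      have h1 : ((k:R)+1) ≤ m + (i:R) * n := by
        have : (0:R) ≤ (i:R) * n := mul_nonneg (Nat.cast_nonneg i) hn.le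
        linarith
      calc ((k:R)+1) * B i ≤ (m + (i:R) * n) * B i :=
            (mul_le_mul_iff_of_pos_right (hBpos i)).mpr h1
      _ = P := hident i hi
    have hstrict : ((k:R)+1) * B k < P := by
      have h1 : ((k:R)+1) < m + (k:R) * n := by
        have hkn : (0:R) < (k:R) * n := by
          apply mul_pos _ hn
          exact_mod_cast hk
        linarith
      calc ((k:R)+1) * B k < (m + (k:R) * n) * B k :=
            (mul_lt_mul_iff_of_pos_right (hBpos k)).mpr h1
      _ = P := hident k (by simp)
    have hsum : ∑ i ∈ Finset.range (k+1), (((k:R)+1) * B i)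
        < ∑ _i ∈ Finset.range (k+1), P := by
      apply Finset.sum_lt_sum
      · intro i hi; exact heach i hi
      · exact ⟨k, by simp, hstrict⟩
    rw [← Finset.mul_sum, Finset.sum_const, Finset.card_range, nsmul_eq_mul] at hsum
    have : ((k:R)+1) * S < ((k:R)+1) * P := by
      push_cast at hsum
      linarith
    exact lt_of_mul_lt_mul_left this hkpos.le
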